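/- Let G be a finite simple graph and A a subset of its vertex set V, with complement Ā = V \ A. Then the number of distinct sets of the form N(X) ∩ Ā over all subsets X ⊆ A equals the number of distinct sets of the form N(Y) ∩ A over all subsets Y ⊆ Ā. (Symmetry of the boolean cut function cut-bool.) -/

import Mathlib

open Finset

/-- The external neighborhood `N(X)`: vertices outside `X` adjacent to some vertex of `X`. -/
noncomputable def extNbhd {V : Type*} [Fintype V] (G : SimpleGraph V) (X : Finset V) :
    Finset V := by
  classical exact Finset.univ.filter fun v => v ∉ X ∧ ∃ x ∈ X, G.Adj x v

/-- The neighborhood family of the cut `{A, Ā}`: the sets `N(X) ∩ Ā` for `X ⊆ A`. -/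
noncomputable def nbhdFamily {V : Type*} [Fintype V] [DecidableEq V] (G : SimpleGraph V)
    (A : Finset V) : Finset (Finset V) :=
  A.powerset.image fun X => extNbhd G X ∩ Aᶜ

lemma mem_extNbhd {V : Type*} [Fintype V] (G : SimpleGraph V) {X : Finset V} {v : V} :
    v ∈ extNbhd G X ↔ v ∉ X ∧ ∃ x ∈ X, G.Adj x v := by
  simp [extNbhd]

lemma roundtrip {V : Type*} [Fintype V] [DecidableEq V] (G : SimpleGraph V)
    (A X : Finset V) (hX : X ⊆ A) :
    extNbhd G (A \ (extNbhd G (Aᶜ \ (extNbhd G X ∩ Aᶜ)) ∩ A)) ∩ Aᶜ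
      = extNbhd G X ∩ Aᶜ := by
  set T := extNbhd G X ∩ Aᶜ with hT
  set S := extNbhd G (Aᶜ \ T) ∩ A with hS
  ext v
  constructor
  · intro hv
    obtain ⟨hv1, hvA'⟩ := mem_inter.mp hv
    have hvA : v ∉ A := mem_compl.mp hvA'
    obtain ⟨-, a, haS, hav⟩ := (mem_extNbhd G).mp hv1
    obtain ⟨haA, haNS⟩ := mem_sdiff.mp haS
    have hanot : a ∉ Aᶜ \ T := fun h => (mem_compl.mp (mem_sdiff.mp h).1) haA
    have hnoadj : ¬ ∃ b ∈ Aᶜ \ T, G.Adj a b := by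
      rintro ⟨b, hb, hab⟩
      exact haNS (mem_inter.mpr ⟨(mem_extNbhd G).mpr ⟨hanot, b, hb, hab.symm⟩, haA⟩)
    by_contra hvT
    exact hnoadj ⟨v, mem_sdiff.mpr ⟨hvA', hvT⟩, hav⟩
  · intro hv
    obtain ⟨hv1, hvA'⟩ := mem_inter.mp hv
    have hvA : v ∉ A := mem_compl.mp hvA'
    obtain ⟨-, x, hxX, hxv⟩ := (mem_extNbhd G).mp hv1
    have hxS : x ∉ S := by
      intro hxSmem
      obtain ⟨hxE, -⟩ := mem_inter.mp hxSmem
      obtain ⟨-, b, hb, hxb⟩ := (mem_extNbhd G).mp hxE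
      obtain ⟨hbA', hbT⟩ := mem_sdiff.mp hb
      exact hbT (mem_inter.mpr ⟨(mem_extNbhd G).mpr
        ⟨fun hbX => (mem_compl.mp hbA') (hX hbX), x, hxX, hxb.symm⟩, hbA'⟩)
    refine mem_inter.mpr ⟨(mem_extNbhd G).mpr ⟨?_, x, mem_sdiff.mpr ⟨hX hxX, hxS⟩, hxv⟩, hvA'⟩
    intro h
    exact hvA (mem_sdiff.mp h).1

lemma nbhdFamily_le {V : Type*} [Fintype V] [DecidableEq V] (G : SimpleGraph V)
    (A : Finset V) : (nbhdFamily G A).card ≤ (nbhdFamily G Aᶜ).card := by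
  apply Finset.card_le_card_of_injOn (fun T => extNbhd G (Aᶜ \ T) ∩ Aᶜᶜ)
  · intro T hT
    simp only [nbhdFamily, mem_coe, mem_image, mem_powerset]
    exact ⟨Aᶜ \ T, sdiff_subset, rfl⟩
  · intro T1 h1 T2 h2 heq
    simp only [nbhdFamily, mem_coe, mem_image, mem_powerset] at h1 h2
    simp only [compl_compl] at heq
    obtain ⟨X1, hX1, rfl⟩ := h1
    obtain ⟨X2, hX2, rfl⟩ := h2
    have h := roundtrip G A X1 hX1
    rw [heq, roundtrip G A X2 hX2] at h
    exact h.symm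

theorem cutBool_symmetric {V : Type*} [Fintype V] [DecidableEq V] (G : SimpleGraph V)
    (A : Finset V) :
    (nbhdFamily G A).card = (nbhdFamily G Aᶜ).card := by
  have h1 := nbhdFamily_le G A
  have h2 := nbhdFamily_le G Aᶜ
  rw [compl_compl] at h2
  omega
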